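/- Let S ⊆ ℝ² be a convex, compact set containing the origin with nonnegative coordinates, with ideal coordinates B = max{x₁ : x ∈ S} > 0 and P = max{x₂ : x ∈ S} > 0. Then there exists a point y ∈ S on the KS-line (i.e., y₁/B = y₂/P) with y₁ + y₂ ≥ (1/2)·(B + P). -/

import Mathlib

/-- in a convex compact bargaining set `S` containing the origin, with nonnegative
coordinates and ideal coordinates `B, P > 0`, there exists a point `y ∈ S` on the KS-line
(`y₁/B = y₂/P`) with total utility at least half the ideal total utility `(B+P)/2`. -/
theorem ks_line_half_ideal_total_utility
    (S : Set (ℝ × ℝ)) (hconv : Convex ℝ S) (hcomp : IsCompact S)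
    (h0 : (0, 0) ∈ S) (hnonneg : ∀ x ∈ S, 0 ≤ x.1 ∧ 0 ≤ x.2)
    (B P : ℝ)
    (hB : IsGreatest ((fun x : ℝ × ℝ => x.1) '' S) B)
    (hP : IsGreatest ((fun x : ℝ × ℝ => x.2) '' S) P)
    (hBpos : 0 < B) (hPpos : 0 < P) :
    ∃ y ∈ S, y.1 / B = y.2 / P ∧ (1 / 2) * (B + P) ≤ y.1 + y.2 := by
  obtain ⟨b, hbS, hb1⟩ := hB.1
  obtain ⟨p, hpS, hp2⟩ := hP.1
  have hb2P : b.2 ≤ P := hP.2 ⟨b, hbS, rfl⟩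
  have hp1B : p.1 ≤ B := hB.2 ⟨p, hpS, rfl⟩
  have hb2 : 0 ≤ b.2 := (hnonneg b hbS).2
  have hp1 : 0 ≤ p.1 := (hnonneg p hpS).1
  set f : ℝ → ℝ := fun t => (t * B + (1 - t) * p.1) / B - (t * b.2 + (1 - t) * P) / P with hf
  have hcont : ContinuousOn f (Set.Icc 0 1) := by
    apply Continuous.continuousOn; fun_prop
  have hf0 : f 0 ≤ 0 := by
    simp only [hf]
    have : p.1 / B ≤ 1 := by rw [div_le_one hBpos]; exact hp1B
    simp only [zero_mul, sub_zero, one_mul, zero_add]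
    rw [div_self hPpos.ne']
    linarith
  have hf1 : 0 ≤ f 1 := by
    simp only [hf]
    have : b.2 / P ≤ 1 := by rw [div_le_one hPpos]; exact hb2P
    simp only [one_mul, sub_self, zero_mul, add_zero]
    rw [div_self hBpos.ne']
    linarith
  have := intermediate_value_Icc (by norm_num : (0:ℝ) ≤ 1) hcont
  obtain ⟨t, ht, hft⟩ := this ⟨hf0, hf1⟩
  set y : ℝ × ℝ := (t * B + (1 - t) * p.1, t * b.2 + (1 - t) * P) with hy
  have hyS : y ∈ S := by
    have := hconv hbS hpS ht.1 (by linarith [ht.2] : (0:ℝ) ≤ 1 - t) (by ring)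
    have heq : t • b + (1 - t) • p = y := by
      simp [hy, Prod.ext_iff, hb1, hp2, smul_eq_mul]
    rwa [heq] at this
  have hline : y.1 / B = y.2 / P := by
    have : f t = 0 := hft
    simp only [hf] at this
    simp only [hy]
    linarith
  refine ⟨y, hyS, hline, ?_⟩
  have hlam : y.1 / B = y.2 / P := hline
  set lam := y.1 / B with hl
  have h1 : t ≤ lam := by
    rw [hl, le_div_iff₀ hBpos]
    simp only [hy]
    nlinarith [ht.2]
  have h2 : 1 - t ≤ lam := by
    rw [hlam, le_div_iff₀ hPpos]
    simp only [hy]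
    nlinarith [ht.1]
  have hhalf : (1:ℝ)/2 ≤ lam := by
    rcases le_total t (1/2) with h | h
    · linarith
    · linarith
  have hy1 : y.1 = lam * B := by rw [hl, div_mul_cancel₀ _ hBpos.ne']
  have hy2 : y.2 = lam * P := by
    have : y.2 / P = lam := hlam.symm
    rw [← this, div_mul_cancel₀ _ hPpos.ne']
  rw [hy1, hy2]
  nlinarith
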